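/- arXiv:1610.04654 — 6 statements merged into one kernel-verified Lean document; each statement's English description precedes it below -/
import Mathlib

section
/- For every n ≥ 1 and complex parameters q, η with η ≠ 0, there exists a constant C (depending only on n, q, η) such that for all points u_0, …, u_n (pairwise distinct modulo the poles of coth), the sum over k = 0, …, n of ∏_{i ≠ k} (q + η·coth(η(u_k - u_i))) equals C. -/
open Complex Finset

noncomputable def coth (t : ℂ) : ℂ := Complex.cosh t / Complex.sinh t

lemma coeff_prod_linear {F : Type*} [Field F] {ι : Type*} [DecidableEq ι]
    (s : Finset ι) (a : F) (c : ι → F) :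
    (∏ i ∈ s, (Polynomial.C a * Polynomial.X - Polynomial.C (c i))).coeff s.card
      = a ^ s.card := by
  induction s using Finset.induction_on with
  | empty => simp
  | @insert j s hj ih =>
    rw [Finset.prod_insert hj, Finset.card_insert_of_notMem hj]
    have hdeg : (∏ i ∈ s, (Polynomial.C a * Polynomial.X - Polynomial.C (c i))).natDegree
        ≤ s.card := by
      have h1 : ∀ i ∈ s, (Polynomial.C a * Polynomial.X - Polynomial.C (c i)).natDegree ≤ 1 :=
        fun i _ => by
          rw [sub_eq_add_neg, ← Polynomial.C_neg]; exact Polynomial.natDegree_linear_le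
      refine le_trans (Polynomial.natDegree_prod_le _ _) ?_
      simpa using Finset.sum_le_sum h1
    rw [sub_mul, Polynomial.coeff_sub, mul_assoc, Polynomial.coeff_C_mul,
      Polynomial.coeff_X_mul, Polynomial.coeff_C_mul, ih,
      Polynomial.coeff_eq_zero_of_natDegree_lt (lt_of_le_of_lt hdeg (Nat.lt_succ_self _)),
      mul_zero, sub_zero, pow_succ, mul_comm]

lemma sum_eval_mul_nodalWeight {F : Type*} [Field F] {ι : Type*} [DecidableEq ι]
    {s : Finset ι} {v : ι → F} (hvs : Set.InjOn v s) (P : Polynomial F)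
    (hP : P.degree < s.card) :
    ∑ i ∈ s, P.eval (v i) * Lagrange.nodalWeight s v i = P.coeff (s.card - 1) := by
  have hbasis : ∀ i ∈ s, (Lagrange.basis s v i).coeff (s.card - 1)
      = Lagrange.nodalWeight s v i := by
    intro i hi
    have hd := Lagrange.natDegree_basis hvs hi
    rw [← hd, ← Polynomial.leadingCoeff, Lagrange.basis, Polynomial.leadingCoeff_prod]
    refine Finset.prod_congr rfl fun j hj => ?_
    obtain ⟨hij, hjs⟩ := Finset.mem_erase.mp hj
    have hne : v i ≠ v j := fun h => hij.symm (hvs hi hjs h)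
    rw [Lagrange.basisDivisor, Polynomial.leadingCoeff_mul, Polynomial.leadingCoeff_C,
      (Polynomial.monic_X_sub_C (v j)).leadingCoeff, mul_one]
  conv_rhs => rw [Lagrange.eq_interpolate hvs hP]
  rw [Lagrange.interpolate_apply, Polynomial.finset_sum_coeff]
  exact Finset.sum_congr rfl fun i hi => by
    rw [Polynomial.coeff_C_mul, hbasis i hi]

lemma prod_erase_zero_fin {M : Type*} [CommMonoid M] {n : ℕ} (g : Fin (n + 1) → M) :
    ∏ j ∈ Finset.univ.erase 0, g j = ∏ i : Fin n, g i.succ := by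
  rw [Fin.univ_succ, Finset.cons_eq_insert, Finset.erase_insert (by simp [Fin.succ_ne_zero]),
    Finset.prod_map]
  rfl

lemma prod_erase_succ_fin {M : Type*} [CommMonoid M] {n : ℕ} (g : Fin (n + 1) → M) (k : Fin n) :
    ∏ j ∈ Finset.univ.erase k.succ, g j = g 0 * ∏ i ∈ Finset.univ.erase k, g i.succ := by
  have h0 : (0 : Fin (n + 1)) ∉ (Finset.univ.erase k).map ⟨Fin.succ, Fin.succ_injective _⟩ := by
    simp [Fin.succ_ne_zero]
  rw [Fin.univ_succ, Finset.cons_eq_insert,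
    Finset.erase_insert_of_ne (Fin.succ_ne_zero k).symm,
    show (Finset.map ⟨Fin.succ, Fin.succ_injective _⟩ (Finset.univ : Finset (Fin n))).erase k.succ
      = Finset.map ⟨Fin.succ, Fin.succ_injective _⟩ (Finset.univ.erase k) from
      (Finset.map_erase ⟨Fin.succ, Fin.succ_injective _⟩ Finset.univ k).symm,
    Finset.prod_insert h0, Finset.prod_map]
  rfl

lemma key_sum {F : Type*} [Field F] (n : ℕ) (a b : F) (hab : a ≠ b)
    (x : Fin (n + 1) → F) (hx0 : ∀ k, x k ≠ 0) (hxd : Function.Injective x) :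
    ∑ k : Fin (n + 1), ∏ i ∈ Finset.univ.erase k, ((a * x k - b * x i) / (x k - x i))
      = (a ^ (n + 1) - b ^ (n + 1)) / (a - b) := by
  set v : Fin (n + 2) → F := Fin.cons 0 x with hv
  have hvinj : Function.Injective v :=
    Fin.cons_injective_of_injective (by rintro ⟨k, hk⟩; exact hx0 k hk) hxd
  set P : Polynomial F :=
    ∏ i : Fin (n + 1), (Polynomial.C a * Polynomial.X - Polynomial.C (b * x i)) with hPdef
  have hnd : P.natDegree ≤ n + 1 := by
    refine le_trans (Polynomial.natDegree_prod_le _ _) ?_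
    have h1 : ∀ i ∈ (Finset.univ : Finset (Fin (n + 1))),
        (Polynomial.C a * Polynomial.X - Polynomial.C (b * x i)).natDegree ≤ 1 := fun i _ => by
      rw [sub_eq_add_neg, ← Polynomial.C_neg]; exact Polynomial.natDegree_linear_le
    simpa using Finset.sum_le_sum h1
  have hPdeg : P.degree < ((Finset.univ : Finset (Fin (n + 2))).card : WithBot ℕ) := by
    rw [Finset.card_univ, Fintype.card_fin]
    refine lt_of_le_of_lt Polynomial.degree_le_natDegree ?_
    exact_mod_cast lt_of_le_of_lt hnd (by omega)
  have hmain := sum_eval_mul_nodalWeight hvinj.injOn P hPdeg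
  have hcoeff : P.coeff ((Finset.univ : Finset (Fin (n + 2))).card - 1) = a ^ (n + 1) := by
    have h := coeff_prod_linear (Finset.univ : Finset (Fin (n + 1))) a (fun i => b * x i)
    rw [Finset.card_univ, Fintype.card_fin] at h
    rw [show (Finset.univ : Finset (Fin (n + 2))).card - 1 = n + 1 by simp]
    exact h
  rw [hcoeff, Fin.sum_univ_succ] at hmain
  -- the term at 0
  have hzero : Polynomial.eval (v 0) P * Lagrange.nodalWeight Finset.univ v 0 = b ^ (n + 1) := by
    have hv0 : v 0 = 0 := Fin.cons_zero _ _
    rw [hv0, Lagrange.nodalWeight, prod_erase_zero_fin (fun j => (v 0 - v j)⁻¹), hPdef]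
    simp only [hv, Fin.cons_succ, Fin.cons_zero, Polynomial.eval_prod, Polynomial.eval_sub, Polynomial.eval_mul,
      Polynomial.eval_C, Polynomial.eval_X]
    rw [← Finset.prod_mul_distrib]
    have : ∀ i ∈ (Finset.univ : Finset (Fin (n + 1))),
        (a * 0 - b * x i) * (0 - x i)⁻¹ = b := by
      intro i _
      have h := mul_inv_cancel₀ (hx0 i)
      calc (a * 0 - b * x i) * (0 - x i)⁻¹ = b * (x i * (x i)⁻¹) := by
            rw [zero_sub, inv_neg]; ring
        _ = b := by rw [h, mul_one]
    rw [Finset.prod_congr rfl this, Finset.prod_const, Finset.card_univ, Fintype.card_fin]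
  -- the terms at succ k
  have hterm : ∀ k : Fin (n + 1),
      Polynomial.eval (v k.succ) P * Lagrange.nodalWeight Finset.univ v k.succ
        = (a - b) * ∏ i ∈ Finset.univ.erase k, ((a * x k - b * x i) / (x k - x i)) := by
    intro k
    have hvk : v k.succ = x k := Fin.cons_succ _ _ _
    have hvs : ∀ i : Fin (n + 1), v i.succ = x i := fun i => Fin.cons_succ _ _ _
    have h1 : Polynomial.eval (x k) P
        = (a * x k - b * x k) * ∏ i ∈ Finset.univ.erase k, (a * x k - b * x i) := by
      rw [hPdef, Polynomial.eval_prod]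
      simp only [Polynomial.eval_sub, Polynomial.eval_mul, Polynomial.eval_C, Polynomial.eval_X]
      exact (Finset.mul_prod_erase Finset.univ _ (Finset.mem_univ k)).symm
    have h2 : Lagrange.nodalWeight Finset.univ v k.succ
        = (x k - 0)⁻¹ * ∏ i ∈ Finset.univ.erase k, (x k - x i)⁻¹ := by
      rw [Lagrange.nodalWeight, prod_erase_succ_fin (fun j => (v k.succ - v j)⁻¹) k]
      simp only [hv, Fin.cons_succ, Fin.cons_zero]
    rw [hvk, h1, h2, sub_zero]
    rw [Finset.prod_div_distrib, div_eq_mul_inv, ← Finset.prod_inv_distrib]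
    have hc : x k * (x k)⁻¹ = 1 := mul_inv_cancel₀ (hx0 k)
    calc (a * x k - b * x k) * (∏ i ∈ Finset.univ.erase k, (a * x k - b * x i))
          * ((x k)⁻¹ * ∏ i ∈ Finset.univ.erase k, (x k - x i)⁻¹)
        = (a - b) * ((∏ i ∈ Finset.univ.erase k, (a * x k - b * x i))
            * ∏ i ∈ Finset.univ.erase k, (x k - x i)⁻¹) * (x k * (x k)⁻¹) := by ring
      _ = _ := by rw [hc, mul_one]
  rw [hzero, Finset.sum_congr rfl (fun k _ => hterm k), ← Finset.mul_sum] at hmain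
  have hab' : a - b ≠ 0 := sub_ne_zero.mpr hab
  rw [eq_div_iff hab']
  linear_combination hmain

theorem coth_hirzebruch_sum_constant (n : ℕ) (hn : 1 ≤ n) (q η : ℂ) (hη : η ≠ 0) :
    ∃ C : ℂ, ∀ u : Fin (n + 1) → ℂ,
      (∀ i k : Fin (n + 1), i ≠ k → Complex.sinh (η * (u k - u i)) ≠ 0) →
      ∑ k : Fin (n + 1), ∏ i ∈ Finset.univ.erase k,
        (q + η * coth (η * (u k - u i))) = C := by
  refine ⟨((q + η) ^ (n + 1) - (q - η) ^ (n + 1)) / ((q + η) - (q - η)), ?_⟩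
  intro u hu
  set x : Fin (n + 1) → ℂ := fun k => Complex.exp (2 * η * u k) with hx
  have hx0 : ∀ k, x k ≠ 0 := fun k => Complex.exp_ne_zero _
  have hsq : ∀ i k : Fin (n + 1),
      x k = Complex.exp (η * (u k - u i)) ^ 2 * x i := by
    intro i k
    rw [hx]
    show Complex.exp (2 * η * u k) = _
    rw [sq, ← Complex.exp_add, ← Complex.exp_add]
    congr 1
    ring
  have hxd : Function.Injective x := by
    intro i k h
    by_contra hik
    apply hu i k hik
    have hE := Complex.exp_ne_zero (η * (u k - u i))
    have h2 : Complex.exp (η * (u k - u i)) ^ 2 = 1 := by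
      have h3 := hsq i k
      rw [h] at h3
      exact mul_right_cancel₀ (hx0 k) (by rw [one_mul]; exact h3.symm)
    have hinv : (Complex.exp (η * (u k - u i)))⁻¹ = Complex.exp (η * (u k - u i)) :=
      inv_eq_of_mul_eq_one_right (by rw [← sq]; exact h2)
    show (Complex.exp (η * (u k - u i)) - Complex.exp (-(η * (u k - u i)))) / 2 = 0
    rw [Complex.exp_neg, hinv, sub_self, zero_div]
  have key : ∀ i k : Fin (n + 1), i ≠ k →
      q + η * coth (η * (u k - u i))
        = ((q + η) * x k - (q - η) * x i) / (x k - x i) := by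
    intro i k hik
    have hs := hu i k hik
    have hE : Complex.exp (η * (u k - u i)) ≠ 0 := Complex.exp_ne_zero _
    have hden : x k - x i ≠ 0 := sub_ne_zero.mpr (fun h => hik (hxd h).symm)
    have hsinh : Complex.sinh (η * (u k - u i))
        = (Complex.exp (η * (u k - u i)) - (Complex.exp (η * (u k - u i)))⁻¹) / 2 := by
      show (Complex.exp (η * (u k - u i)) - Complex.exp (-(η * (u k - u i)))) / 2 = _
      rw [Complex.exp_neg]
    have hcosh : Complex.cosh (η * (u k - u i))
        = (Complex.exp (η * (u k - u i)) + (Complex.exp (η * (u k - u i)))⁻¹) / 2 := by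
      show (Complex.exp (η * (u k - u i)) + Complex.exp (-(η * (u k - u i)))) / 2 = _
      rw [Complex.exp_neg]
    have hs' : Complex.exp (η * (u k - u i)) - (Complex.exp (η * (u k - u i)))⁻¹ ≠ 0 := by
      intro h; apply hs; rw [hsinh, h, zero_div]
    have hden' : Complex.exp (η * (u k - u i)) ^ 2 * x i - x i ≠ 0 := by
      rw [← hsq i k]; exact hden
    unfold coth
    rw [hcosh, hsinh, hsq i k]
    set E := Complex.exp (η * (u k - u i)) with hEdef
    have hne : E ^ 2 - 1 ≠ 0 := fun h => hden' (by linear_combination (x i) * h)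
    have hne' : -1 + E ^ 2 ≠ 0 := fun h => hne (by linear_combination h)
    have hxi := hx0 i
    field_simp [hne']
    linear_combination
  have hab : (q + η) ≠ (q - η) := by
    intro h; apply hη; linear_combination (1 / 2 : ℂ) * h
  rw [Finset.sum_congr rfl (fun k _ => Finset.prod_congr rfl
    (fun i hi => key i k (Finset.mem_erase.mp hi).1))]
  exact key_sum n (q + η) (q - η) hab x hx0 hxd
end

section
/- Let f(t) = (e^{αt} − e^{βt})/(α e^{βt} − β e^{αt}) for complex α ≠ β. Then for every n ≥ 1 there exists a constant C such that for all u_0, …, u_n with pairwise distinct values making all f(u_i − u_k) defined and nonzero, ∑_{k=0}^n ∏_{i ≠ k} 1/f(u_i − u_k) = C. -/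
open Complex Finset

noncomputable def toddFun (α β t : ℂ) : ℂ :=
  (Complex.exp (α * t) - Complex.exp (β * t)) /
    (α * Complex.exp (β * t) - β * Complex.exp (α * t))

namespace ToddAux

open Polynomial

lemma lagrange_basis_coeff {F : Type*} [Field F] {ι : Type*} [DecidableEq ι]
    (s : Finset ι) (v : ι → F) (hvs : Set.InjOn v s) {i : ι} (hi : i ∈ s) :
    (Lagrange.basis s v i).coeff (s.card - 1) = ∏ j ∈ s.erase i, (v i - v j)⁻¹ := by
  rw [← Lagrange.natDegree_basis hvs hi, Polynomial.coeff_natDegree, Lagrange.basis,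
    Polynomial.leadingCoeff_prod]
  refine Finset.prod_congr rfl fun j hj => ?_
  rw [Lagrange.basisDivisor, Polynomial.leadingCoeff_mul, Polynomial.leadingCoeff_C,
    (Polynomial.monic_X_sub_C _).leadingCoeff, mul_one]

lemma coeff_top_eq_sum {F : Type*} [Field F] {ι : Type*} [DecidableEq ι]
    (s : Finset ι) (v : ι → F) (hvs : Set.InjOn v s) (f : F[X])
    (hf : f.degree < s.card) :
    f.coeff (s.card - 1) = ∑ i ∈ s, f.eval (v i) * ∏ j ∈ s.erase i, (v i - v j)⁻¹ := by
  conv_lhs => rw [Lagrange.eq_interpolate hvs hf]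
  rw [Lagrange.interpolate_apply, Polynomial.finset_sum_coeff]
  exact Finset.sum_congr rfl fun i hi => by
    rw [Polynomial.coeff_C_mul, lagrange_basis_coeff s v hvs hi]

lemma natDegree_linear_le' {F : Type*} [Field F] (a b : F) :
    (Polynomial.C a * Polynomial.X - Polynomial.C b).natDegree ≤ 1 := by
  rw [sub_eq_add_neg, ← map_neg]
  exact Polynomial.natDegree_linear_le

lemma natDegree_prod_linear_le {F : Type*} [Field F] {ι : Type*} [DecidableEq ι]
    (a : F) (b : ι → F) (s : Finset ι) :
    (∏ i ∈ s, (Polynomial.C a * Polynomial.X - Polynomial.C (b i))).natDegree ≤ s.card := by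
  refine le_trans (Polynomial.natDegree_prod_le _ _) ?_
  rw [Finset.card_eq_sum_ones]
  exact Finset.sum_le_sum fun i _ => natDegree_linear_le' a (b i)

lemma coeff_prod_linear {F : Type*} [Field F] {ι : Type*} [DecidableEq ι]
    (a : F) (b : ι → F) (s : Finset ι) :
    (∏ i ∈ s, (Polynomial.C a * Polynomial.X - Polynomial.C (b i))).coeff s.card
      = a ^ s.card := by
  induction s using Finset.induction_on with
  | empty => simp
  | @insert j s hj ih =>
    rw [Finset.prod_insert hj, Finset.card_insert_of_notMem hj]
    have h0 : (∏ i ∈ s, (Polynomial.C a * Polynomial.X - Polynomial.C (b i))).coeff (s.card + 1) = 0 :=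
      Polynomial.coeff_eq_zero_of_natDegree_lt
        (lt_of_le_of_lt (natDegree_prod_linear_le a b s) (Nat.lt_succ_self _))
    rw [sub_mul, Polynomial.coeff_sub, mul_assoc, Polynomial.coeff_C_mul,
      Polynomial.coeff_X_mul, Polynomial.coeff_C_mul, ih, h0, mul_zero, sub_zero, pow_succ]
    ring

lemma todd_inv (α β : ℂ) (w w' : ℂ)
    (hT : toddFun α β (w - w') ≠ 0) :
    (toddFun α β (w - w'))⁻¹ =
      (α * Complex.exp ((α - β) * w') - β * Complex.exp ((α - β) * w)) /
        (Complex.exp ((α - β) * w) - Complex.exp ((α - β) * w')) := by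
  set t := w - w' with ht
  set x := Complex.exp ((α - β) * w) with hxdef
  set y := Complex.exp ((α - β) * w') with hydef
  have hy : y ≠ 0 := Complex.exp_ne_zero _
  have hE : Complex.exp (α * t) = Complex.exp (β * t) * x / y := by
    rw [eq_div_iff hy, hxdef, hydef, ← Complex.exp_add, ← Complex.exp_add]
    congr 1; rw [ht]; ring
  have hN : Complex.exp (α * t) - Complex.exp (β * t) ≠ 0 :=
    (div_ne_zero_iff.mp hT).1
  have hxy : x ≠ y := by
    intro h
    apply hN
    rw [hE, h, mul_div_cancel_right₀ _ hy, sub_self]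
  have h1 : Complex.exp (β * t) * x / y - Complex.exp (β * t) ≠ 0 := by
    rw [← hE]; exact hN
  rw [toddFun, inv_div, hE, div_eq_div_iff h1 (sub_ne_zero.mpr hxy)]
  have hb : Complex.exp (β * t) ≠ 0 := Complex.exp_ne_zero _
  field_simp

lemma todd_ne (α β : ℂ) (w w' : ℂ)
    (hT : toddFun α β (w - w') ≠ 0) :
    Complex.exp ((α - β) * w) ≠ Complex.exp ((α - β) * w') := by
  set t := w - w' with ht
  set x := Complex.exp ((α - β) * w) with hxdef
  set y := Complex.exp ((α - β) * w') with hydef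
  have hy : y ≠ 0 := Complex.exp_ne_zero _
  have hE : Complex.exp (α * t) = Complex.exp (β * t) * x / y := by
    rw [eq_div_iff hy, hxdef, hydef, ← Complex.exp_add, ← Complex.exp_add]
    congr 1; rw [ht]; ring
  have hN : Complex.exp (α * t) - Complex.exp (β * t) ≠ 0 :=
    (div_ne_zero_iff.mp hT).1
  intro h
  apply hN
  rw [hE, h, mul_div_cancel_right₀ _ hy, sub_self]

end ToddAux

theorem todd_hirzebruch_equation (n : ℕ) (hn : 1 ≤ n) (α β : ℂ) (hαβ : α ≠ β) :
    ∃ C : ℂ, ∀ u : Fin (n + 1) → ℂ,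
      (∀ i k : Fin (n + 1), i ≠ k →
        α * Complex.exp (β * (u i - u k)) - β * Complex.exp (α * (u i - u k)) ≠ 0 ∧
        toddFun α β (u i - u k) ≠ 0) →
      ∑ k : Fin (n + 1), ∏ i ∈ Finset.univ.erase k, (toddFun α β (u i - u k))⁻¹ = C := by
  have hαβ' : α - β ≠ 0 := sub_ne_zero.mpr hαβ
  refine ⟨(-1 : ℂ) ^ n * ((α ^ (n + 1) - β ^ (n + 1)) / (α - β)), fun u hu => ?_⟩
  set x : Fin (n + 1) → ℂ := fun j => Complex.exp ((α - β) * u j) with hxdef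
  have hx0 : ∀ j, x j ≠ 0 := fun j => Complex.exp_ne_zero _
  have hne : ∀ i k : Fin (n + 1), i ≠ k → x i ≠ x k := fun i k h =>
    ToddAux.todd_ne α β (u i) (u k) (hu i k h).2
  -- the node function on Option (Fin (n+1))
  set v : Option (Fin (n + 1)) → ℂ := fun o => o.elim 0 x with hvdef
  have hinj : Set.InjOn v (Finset.univ : Finset (Option (Fin (n + 1)))) := by
    rintro a - b - h
    match a, b with
    | none, none => rfl
    | none, some k => exact absurd h.symm (hx0 k)
    | some i, none => exact absurd h (hx0 i)
    | some i, some k =>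
      by_contra hc
      exact hne i k (fun hik => hc (by rw [hik])) h
  set f : Polynomial ℂ :=
    ∏ i : Fin (n + 1), (Polynomial.C α * Polynomial.X - Polynomial.C (β * x i)) with hfdef
  have hcard : (Finset.univ : Finset (Option (Fin (n + 1)))).card = n + 2 := by
    simp [Finset.card_univ]
  have hvn : v none = 0 := rfl
  have hvs : ∀ k, v (some k) = x k := fun k => rfl
  have hnat : f.natDegree ≤ n + 1 := by
    rw [hfdef]
    simpa only [Finset.card_univ, Fintype.card_fin] using
      ToddAux.natDegree_prod_linear_le α (fun i => β * x i) (Finset.univ : Finset (Fin (n + 1)))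
  have hdeg : f.degree < ((Finset.univ : Finset (Option (Fin (n + 1)))).card : WithBot ℕ) := by
    refine lt_of_le_of_lt f.degree_le_natDegree ?_
    rw [hcard]
    exact_mod_cast Nat.lt_of_le_of_lt hnat (by omega)
  have key := ToddAux.coeff_top_eq_sum Finset.univ v hinj f hdeg
  rw [hcard] at key
  -- LHS of key
  have hlhs : f.coeff (n + 2 - 1) = α ^ (n + 1) := by
    rw [hfdef]
    show _ = α ^ (n + 1)
    rw [show n + 2 - 1 = n + 1 by omega]
    simpa only [Finset.card_univ, Fintype.card_fin] using
      ToddAux.coeff_prod_linear α (fun i => β * x i) (Finset.univ : Finset (Fin (n + 1)))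
  -- erase lemmas
  have he0 : (Finset.univ : Finset (Option (Fin (n + 1)))).erase none
      = Finset.univ.map ⟨some, Option.some_injective _⟩ := by
    ext o; cases o <;> simp
  have hesome : ∀ k : Fin (n + 1),
      (Finset.univ : Finset (Option (Fin (n + 1)))).erase (some k)
        = insert none ((Finset.univ.erase k).map ⟨some, Option.some_injective _⟩) := by
    intro k; ext o; cases o <;> simp
  have heval : ∀ z : ℂ, f.eval z = ∏ i : Fin (n + 1), (α * z - β * x i) := by
    intro z; simp [hfdef, Polynomial.eval_prod]
  -- none term
  have hnone : f.eval (v none) * ∏ j ∈ (Finset.univ : Finset (Option (Fin (n+1)))).erase none,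
      (v none - v j)⁻¹ = β ^ (n + 1) := by
    rw [he0, Finset.prod_map, heval]
    simp only [Function.Embedding.coeFn_mk, hvn, hvs]
    rw [← Finset.prod_mul_distrib]
    have : ∀ i : Fin (n + 1),
        (α * 0 - β * x i) * ((0 : ℂ) - x i)⁻¹ = β := by
      intro i
      rw [mul_zero, zero_sub, zero_sub, inv_neg, neg_mul_neg,
        mul_inv_eq_iff_eq_mul₀ (hx0 i)]
    rw [Finset.prod_congr rfl fun i _ => this i, Finset.prod_const, Finset.card_univ,
      Fintype.card_fin]
  -- some terms
  have hsome : ∀ k : Fin (n + 1),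
      f.eval (v (some k)) * ∏ j ∈ (Finset.univ : Finset (Option (Fin (n+1)))).erase (some k),
        (v (some k) - v j)⁻¹
      = (α - β) * ∏ i ∈ Finset.univ.erase k, ((α * x k - β * x i) * (x k - x i)⁻¹) := by
    intro k
    have hnotmem : (none : Option (Fin (n+1))) ∉ (Finset.univ.erase k).map
        ⟨some, Option.some_injective _⟩ := by simp
    rw [hesome k, Finset.prod_insert hnotmem, Finset.prod_map, heval]
    simp only [Function.Embedding.coeFn_mk, hvn, hvs]
    have hsplit : ∏ i : Fin (n + 1), (α * x k - β * x i)
        = (α * x k - β * x k) * ∏ i ∈ Finset.univ.erase k, (α * x k - β * x i) := by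
      rw [← Finset.mul_prod_erase Finset.univ _ (Finset.mem_univ k)]
    rw [hsplit, Finset.prod_mul_distrib, sub_zero]
    have hk : (α * x k - β * x k) * (x k)⁻¹ = α - β := by
      rw [← sub_mul, mul_assoc, mul_inv_cancel₀ (hx0 k), mul_one]
    linear_combination ((∏ i ∈ Finset.univ.erase k, (α * x k - β * x i)) *
      ∏ i ∈ Finset.univ.erase k, (x k - x i)⁻¹) * hk
  -- rewrite key
  rw [Fintype.sum_option, hlhs, hnone] at key
  rw [Finset.sum_congr rfl fun k _ => hsome k, ← Finset.mul_sum] at key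
  have hsumT : ∑ k : Fin (n + 1), ∏ i ∈ Finset.univ.erase k,
      ((α * x k - β * x i) * (x k - x i)⁻¹) = (α ^ (n + 1) - β ^ (n + 1)) / (α - β) := by
    rw [eq_div_iff hαβ']
    linear_combination -key
  -- now the goal
  have hgoal : ∀ k : Fin (n + 1), ∏ i ∈ Finset.univ.erase k, (toddFun α β (u i - u k))⁻¹
      = (-1 : ℂ) ^ n * ∏ i ∈ Finset.univ.erase k, ((α * x k - β * x i) * (x k - x i)⁻¹) := by
    intro k
    have hcarde : (Finset.univ.erase k).card = n := by
      rw [Finset.card_erase_of_mem (Finset.mem_univ k), Finset.card_univ, Fintype.card_fin]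
      omega
    calc ∏ i ∈ Finset.univ.erase k, (toddFun α β (u i - u k))⁻¹
        = ∏ i ∈ Finset.univ.erase k, (-1 : ℂ) * ((α * x k - β * x i) * (x k - x i)⁻¹) := by
          refine Finset.prod_congr rfl fun i hi => ?_
          have hik : i ≠ k := Finset.ne_of_mem_erase hi
          rw [ToddAux.todd_inv α β (u i) (u k) (hu i k hik).2]
          show (α * x k - β * x i) / (x i - x k) = _
          rw [div_eq_iff (sub_ne_zero.mpr (hne i k hik))]
          have h2 : x k - x i ≠ 0 := sub_ne_zero.mpr (hne k i (fun h => hik h.symm))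
          field_simp
          ring
      _ = (-1 : ℂ) ^ n * ∏ i ∈ Finset.univ.erase k, ((α * x k - β * x i) * (x k - x i)⁻¹) := by
          rw [Finset.prod_mul_distrib, Finset.prod_const, hcarde]
  rw [Finset.sum_congr rfl fun k _ => hgoal k, ← Finset.mul_sum, hsumT]
end

section
/- For n ≥ 1 and a nonzero complex number λ, the function (u_0, …, u_n) ↦ ∑_{k=0}^n ∏_{i ≠ k} e^{λ(u_i − u_k)}·(q + u_k − u_i) is not constant on any nonempty open set (for any fixed q ∈ ℂ). Equivalently, the function f(t) = t·e^{λt}/(1 + q t) with λ ≠ 0 does not satisfy the Hirzebruch functional equation ∑_{k=0}^n ∏_{i≠k} 1/f(u_i − u_k) = C. -/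
open Complex Finset Filter Topology

-- exp decay beats linear growth (real version)
lemma real_decay (a c d : ℝ) (ha : 0 < a) :
    Tendsto (fun s : ℝ => (c + d * s) / Real.exp (a * s)) atTop (𝓝 0) := by
  have h := (Polynomial.tendsto_div_exp_atTop (Polynomial.C c + Polynomial.C (d/a) * Polynomial.X)).comp
    (tendsto_id.const_mul_atTop ha)
  refine h.congr fun s => ?_
  simp [Function.comp, Polynomial.eval_add, Polynomial.eval_mul]
  field_simp

-- exp decay beats linear growth (complex version)
lemma cx_decay (z α β : ℂ) (hz : z.re < 0) :
    Tendsto (fun s : ℝ => Complex.exp (z * s) * (α + β * s)) atTop (𝓝 0) := by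
  apply squeeze_zero_norm' (a := fun s : ℝ => (‖α‖ + ‖β‖ * s) / Real.exp ((-z.re) * s))
  · filter_upwards [eventually_ge_atTop (0:ℝ)] with s hs
    rw [norm_mul, Complex.norm_exp]
    have h1 : (z * (s:ℂ)).re = z.re * s := by simp [Complex.mul_re]
    rw [h1]
    have h2 : ‖α + β * (s:ℂ)‖ ≤ ‖α‖ + ‖β‖ * s := by
      calc ‖α + β * (s:ℂ)‖ ≤ ‖α‖ + ‖β * (s:ℂ)‖ := norm_add_le _ _
        _ = ‖α‖ + ‖β‖ * s := by
            rw [norm_mul, Complex.norm_real]; rw [Real.norm_of_nonneg hs]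
    have h3 : Real.exp (z.re * s) = (Real.exp ((-z.re) * s))⁻¹ := by
      rw [← Real.exp_neg]; ring_nf
    rw [h3, mul_comm, div_eq_mul_inv]
    gcongr
  · exact real_decay (-z.re) ‖α‖ ‖β‖ (by linarith)

set_option maxHeartbeats 1000000 in
theorem exp_poly_sum_not_locally_constant (n : ℕ) (hn : 1 ≤ n) (lam q : ℂ) (hlam : lam ≠ 0)
    (U : Set (Fin (n + 1) → ℂ)) (hU : IsOpen U) (hUne : U.Nonempty) :
    ¬ ∃ C : ℂ, ∀ u ∈ U,
      ∑ k : Fin (n + 1), ∏ i ∈ Finset.univ.erase k,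
        Complex.exp (lam * (u i - u k)) * (q + u k - u i) = C := by
  rintro ⟨C, hC⟩
  obtain ⟨c, hc⟩ := hUne
  set w : ℂ := -(starRingEnd ℂ) lam with hw
  have hwne : w ≠ 0 := by simpa [hw] using hlam
  -- the slice
  set v : ℂ → Fin (n + 1) → ℂ := fun t i => if i = 0 then c 0 + t else c i with hv
  set g : ℂ → ℂ := fun t => ∑ k : Fin (n + 1), ∏ i ∈ Finset.univ.erase k,
    Complex.exp (lam * (v t i - v t k)) * (q + v t k - v t i) with hgdef
  have hvdiff : ∀ i, Differentiable ℂ (fun t => v t i) := by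
    intro i
    by_cases h : i = 0
    · have : (fun t => v t i) = fun t => c 0 + t := by funext t; simp [hv, h]
      rw [this]; fun_prop
    · have : (fun t => v t i) = fun _ => c i := by funext t; simp [hv, h]
      rw [this]; fun_prop
  have hgdiff : Differentiable ℂ g := by
    apply Differentiable.fun_sum
    intro k _
    apply Differentiable.fun_finsetProd
    intro i _
    exact (Complex.differentiable_exp.comp
      ((differentiable_const lam).mul ((hvdiff i).sub (hvdiff k)))).mul
      (((differentiable_const q).add (hvdiff k)).sub (hvdiff i))
  -- g is eventually C near 0
  have hv0 : v 0 = c := by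
    funext i; by_cases h : i = 0 <;> simp [hv, h]
  have hvcont : Continuous v := by
    apply continuous_pi
    intro i
    exact (hvdiff i).continuous
  have hev : g =ᶠ[𝓝 (0 : ℂ)] fun _ => C := by
    have hmem : ∀ᶠ t in 𝓝 (0 : ℂ), v t ∈ U := by
      have : Tendsto v (𝓝 0) (𝓝 c) := by
        rw [← hv0]; exact hvcont.continuousAt
      exact this (hU.mem_nhds hc)
    filter_upwards [hmem] with t ht
    exact hC (v t) ht
  -- identity theorem : g = C everywhere
  have hg : ∀ t, g t = C := by
    have h1 : AnalyticOnNhd ℂ g Set.univ :=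
      hgdiff.differentiableOn.analyticOnNhd isOpen_univ
    have h2 : AnalyticOnNhd ℂ (fun _ : ℂ => C) Set.univ := analyticOnNhd_const
    exact fun t => congrFun (h1.eq_of_eventuallyEq h2 hev) t
  -- the explicit exponential-polynomial form along the slice
  set P : ℂ → ℂ := fun t => ∏ i ∈ Finset.univ.erase (0 : Fin (n+1)),
    (Complex.exp (lam * (c i - c 0)) * (q + c 0 - c i + t)) with hP
  set N : Fin (n+1) → ℂ := fun k => ∏ i ∈ (Finset.univ.erase k).erase (0 : Fin (n+1)),
    (Complex.exp (lam * (c i - c k)) * (q + c k - c i)) with hN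
  set E : Fin (n+1) → ℂ → ℂ := fun k t => Complex.exp (((n:ℂ)+1) * lam * t) *
    (Complex.exp (lam * (c 0 - c k)) * (q + c k - c 0 - t) * N k) with hE
  have hvt0 : ∀ t : ℂ, v t 0 = c 0 + t := fun t => by simp [hv]
  have hvti : ∀ (t : ℂ) (i : Fin (n+1)), i ≠ 0 → v t i = c i := fun t i h => by simp [hv, h]
  have combine : ∀ (A B A' B' y y' Z : ℂ), A + B = A' + B' → y = y' →
      Complex.exp A * (Complex.exp B * y * Z) = Complex.exp A' * (Complex.exp B' * y' * Z) := by
    intro A B A' B' y y' Z h1 h2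
    rw [h2]
    calc Complex.exp A * (Complex.exp B * y' * Z)
        = Complex.exp A * Complex.exp B * (y' * Z) := by ring
      _ = Complex.exp (A + B) * (y' * Z) := by rw [Complex.exp_add]
      _ = Complex.exp (A' + B') * (y' * Z) := by rw [h1]
      _ = Complex.exp A' * (Complex.exp B' * y' * Z) := by rw [Complex.exp_add]; ring
  have key : ∀ t : ℂ, Complex.exp ((n:ℂ) * lam * t) * g t
      = P t + ∑ k ∈ Finset.univ.erase (0 : Fin (n+1)), E k t := by
    intro t
    rw [hgdef]
    simp only
    rw [← Finset.add_sum_erase _ _ (Finset.mem_univ (0 : Fin (n+1))), mul_add, Finset.mul_sum]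
    congr 1
    · -- k = 0 term
      have hcard : (Finset.univ.erase (0 : Fin (n+1))).card = n := by
        simp [Finset.card_erase_of_mem]
      have hexp : Complex.exp ((n:ℂ) * lam * t)
          = ∏ _i ∈ Finset.univ.erase (0 : Fin (n+1)), Complex.exp (lam * t) := by
        rw [Finset.prod_const, hcard, ← Complex.exp_nat_mul]
        congr 1; ring
      rw [hexp, ← Finset.prod_mul_distrib, hP]
      apply Finset.prod_congr rfl
      intro i hi
      have hi0 : i ≠ 0 := (Finset.mem_erase.1 hi).1
      rw [hvti t i hi0, hvt0 t, ← mul_assoc, ← Complex.exp_add]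
      have harg : lam * t + lam * (c i - (c 0 + t)) = lam * (c i - c 0) := by ring
      rw [harg]; ring
    · -- k ≠ 0 terms
      apply Finset.sum_congr rfl
      intro k hk
      have hk0 : k ≠ 0 := (Finset.mem_erase.1 hk).1
      have h0m : (0 : Fin (n+1)) ∈ Finset.univ.erase k :=
        Finset.mem_erase.2 ⟨Ne.symm hk0, Finset.mem_univ 0⟩
      rw [← Finset.mul_prod_erase _ _ h0m]
      have hNk : (∏ i ∈ (Finset.univ.erase k).erase (0 : Fin (n+1)),
          Complex.exp (lam * (v t i - v t k)) * (q + v t k - v t i)) = N k := by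
        rw [hN]
        apply Finset.prod_congr rfl
        intro i hi
        have hi0 : i ≠ 0 := (Finset.mem_erase.1 hi).1
        rw [hvti t i hi0, hvti t k hk0]
      rw [hNk, hvt0 t, hvti t k hk0, hE]
      simp only
      refine combine _ _ _ _ _ _ _ ?_ ?_ <;> ring
  -- rearrange using hg
  have hPs : ∀ s : ℝ, P ((s:ℂ) * w) = C * Complex.exp ((n:ℂ) * lam * ((s:ℂ) * w))
      - ∑ k ∈ Finset.univ.erase (0 : Fin (n+1)), E k ((s:ℂ) * w) := by
    intro s
    have h := key ((s:ℂ) * w)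
    rw [hg ((s:ℂ) * w)] at h
    linear_combination -h
  -- the decay estimates
  have ha : (0:ℝ) < Complex.normSq lam := Complex.normSq_pos.2 hlam
  have hlw : lam * w = ((-(Complex.normSq lam) : ℝ) : ℂ) := by
    rw [hw, mul_neg, Complex.mul_conj]; push_cast; ring
  have hz1 : ((n:ℂ) * lam * w) = ((-(n * Complex.normSq lam) : ℝ) : ℂ) := by
    rw [mul_assoc, hlw]; push_cast; ring
  have hz2 : (((n:ℂ)+1) * lam * w) = ((-((n+1) * Complex.normSq lam) : ℝ) : ℂ) := by
    rw [mul_assoc, hlw]; push_cast; ring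
  have hz1re : ((n:ℂ) * lam * w).re < 0 := by
    rw [hz1, Complex.ofReal_re]
    have hn' : (1:ℝ) ≤ (n:ℝ) := by exact_mod_cast hn
    nlinarith
  have hz2re : (((n:ℂ)+1) * lam * w).re < 0 := by
    rw [hz2, Complex.ofReal_re]
    have hn' : (0:ℝ) ≤ (n:ℝ) := Nat.cast_nonneg n
    nlinarith
  have term1 : Tendsto (fun s : ℝ => C * Complex.exp ((n:ℂ) * lam * ((s:ℂ) * w)))
      atTop (𝓝 0) := by
    refine (cx_decay ((n:ℂ) * lam * w) C 0 hz1re).congr fun s => ?_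
    rw [show ((n:ℂ) * lam * w) * (s:ℂ) = (n:ℂ) * lam * ((s:ℂ) * w) from by ring]
    ring
  have term2 : Tendsto (fun s : ℝ => ∑ k ∈ Finset.univ.erase (0 : Fin (n+1)),
      E k ((s:ℂ) * w)) atTop (𝓝 0) := by
    have : Tendsto (fun s : ℝ => ∑ k ∈ Finset.univ.erase (0 : Fin (n+1)),
        E k ((s:ℂ) * w)) atTop (𝓝 (∑ k ∈ Finset.univ.erase (0 : Fin (n+1)), 0)) := by
      apply tendsto_finset_sum
      intro k _
      refine (cx_decay (((n:ℂ)+1) * lam * w)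
        (Complex.exp (lam * (c 0 - c k)) * (q + c k - c 0) * N k)
        (-(Complex.exp (lam * (c 0 - c k)) * w * N k)) hz2re).congr fun s => ?_
      rw [hE]
      simp only
      rw [show (((n:ℂ)+1) * lam * w) * (s:ℂ) = ((n:ℂ)+1) * lam * ((s:ℂ) * w) from by ring]
      ring
    simpa using this
  have hlim : Tendsto (fun s : ℝ => P ((s:ℂ) * w)) atTop (𝓝 0) := by
    have := term1.sub term2
    rw [sub_zero] at this
    exact this.congr fun s => (hPs s).symm
  -- eventual lower bound on ‖P (s w)‖
  have hbig : ∀ᶠ s : ℝ in atTop, (1:ℝ) ≤ ‖P ((s:ℂ) * w)‖ := by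
    have hfac : ∀ i ∈ Finset.univ.erase (0 : Fin (n+1)), ∀ᶠ s : ℝ in atTop,
        (1:ℝ) ≤ ‖Complex.exp (lam * (c i - c 0)) * (q + c 0 - c i + (s:ℂ) * w)‖ := by
      intro i _
      have hinner : Tendsto (fun s : ℝ => ‖q + c 0 - c i + (s:ℂ) * w‖) atTop atTop := by
        apply tendsto_atTop_mono' atTop
          (f₁ := fun s : ℝ => s * ‖w‖ + (-‖q + c 0 - c i‖))
        · filter_upwards [eventually_ge_atTop (0:ℝ)] with s hs
          have h1 : ‖(s:ℂ) * w‖ - ‖-(q + c 0 - c i)‖ ≤ ‖(s:ℂ) * w - -(q + c 0 - c i)‖ :=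
            norm_sub_norm_le _ _
          have h2 : ‖(s:ℂ) * w‖ = s * ‖w‖ := by
            rw [norm_mul, Complex.norm_real, Real.norm_of_nonneg hs]
          have h3 : (s:ℂ) * w - -(q + c 0 - c i) = q + c 0 - c i + (s:ℂ) * w := by ring
          rw [h2, h3, norm_neg (q + c 0 - c i)] at h1
          linarith
        · exact tendsto_atTop_add_const_right atTop _
            (tendsto_id.atTop_mul_const (norm_pos_iff.2 hwne))
      have htend : Tendsto (fun s : ℝ =>
          ‖Complex.exp (lam * (c i - c 0)) * (q + c 0 - c i + (s:ℂ) * w)‖) atTop atTop := by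
        have := hinner.const_mul_atTop
          (norm_pos_iff.2 (Complex.exp_ne_zero (lam * (c i - c 0))))
        exact this.congr fun s => by rw [norm_mul]
      exact htend.eventually_ge_atTop 1
    have hall := (eventually_all_finset (Finset.univ.erase (0 : Fin (n+1)))).2 hfac
    filter_upwards [hall] with s hs
    rw [hP]
    simp only
    rw [norm_prod]
    have := Finset.prod_le_prod (s := Finset.univ.erase (0 : Fin (n+1)))
      (f := fun _ => (1:ℝ))
      (g := fun i => ‖Complex.exp (lam * (c i - c 0)) * (q + c 0 - c i + (s:ℂ) * w)‖)
      (fun i _ => zero_le_one) hs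
    simpa using this
  have hsmall : ∀ᶠ s : ℝ in atTop, ‖P ((s:ℂ) * w)‖ < 1 := by
    have := hlim.norm
    rw [norm_zero] at this
    exact this.eventually_lt_const one_pos
  obtain ⟨s, h1, h2⟩ := (hbig.and hsmall).exists
  linarith
end

section
/- Let n ≥ 1 and let λ be a complex number. Consider the n+1 exponent sequences L_k = (k − λ(n+1)/2, followed by {0,1,…,n} \ {n−k}) for k = 0,…,n (as multisets), and the sequence R = (n + λ/2, n−1 + λ/2, …, 1 + λ/2, λ/2). If some L_k equals R as a multiset, then λ ∈ {0, 2, −2}. -/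
open Finset

/-- The multiset `L_k = {k − λ(n+1)/2} ∪ ({0,…,n} \ {n−k})` of exponents. -/
noncomputable def Lmul (n k : ℕ) (lam : ℂ) : Multiset ℂ :=
  ((k : ℂ) - lam * ((n : ℂ) + 1) / 2) ::ₘ
    (((Finset.range (n + 1)).erase (n - k)).val.map (fun j => (j : ℂ)))

/-- The multiset `R = {j + λ/2 : j = 0,…,n}`. -/
noncomputable def Rmul (n : ℕ) (lam : ℂ) : Multiset ℂ :=
  (Multiset.range (n + 1)).map (fun j => (j : ℂ) + lam / 2)

theorem multiset_equal_implies_lambda (n : ℕ) (hn : 1 ≤ n) (lam : ℂ) (k : ℕ) (hk : k ≤ n)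
    (h : Lmul n k lam = Rmul n lam) :
    lam = 0 ∨ lam = 2 ∨ lam = -2 := by
  have hmem : n - k ∈ Finset.range (n + 1) := by
    simp [Finset.mem_range]
  set S1 : ℂ := ∑ j ∈ Finset.range (n + 1), (j : ℂ) with hS1def
  set S2 : ℂ := ∑ j ∈ Finset.range (n + 1), (j : ℂ)^2 with hS2def
  have hcast : ((n - k : ℕ) : ℂ) = (n : ℂ) - (k : ℂ) := by
    push_cast [Nat.cast_sub hk]; ring
  -- erase sums
  have herase1 : (∑ x ∈ (Finset.range (n+1)).erase (n-k), (x:ℂ)) + ((n:ℂ) - k) = S1 := by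
    have h0 : (∑ x ∈ (Finset.range (n+1)).erase (n-k), (x:ℂ)) + ((n - k : ℕ) : ℂ)
        = ∑ x ∈ Finset.range (n+1), (x:ℂ) :=
      Finset.sum_erase_add (Finset.range (n+1)) (fun j : ℕ => (j:ℂ)) hmem
    rw [hcast] at h0; exact h0
  have herase2 : (∑ x ∈ (Finset.range (n+1)).erase (n-k), (x:ℂ)^2) + ((n:ℂ) - k)^2 = S2 := by
    have h0 : (∑ x ∈ (Finset.range (n+1)).erase (n-k), (x:ℂ)^2) + ((n - k : ℕ) : ℂ)^2
        = ∑ x ∈ Finset.range (n+1), (x:ℂ)^2 :=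
      Finset.sum_erase_add (Finset.range (n+1)) (fun j : ℕ => (j:ℂ)^2) hmem
    rw [hcast] at h0; exact h0
  -- right-hand side sums
  have hsplit1 : ∑ j ∈ Finset.range (n+1), ((j:ℂ) + lam/2) = S1 + ((n:ℂ)+1) * lam / 2 := by
    rw [Finset.sum_add_distrib]
    simp [Finset.card_range, hS1def]
    ring
  have hsplit2 : ∑ j ∈ Finset.range (n+1), ((j:ℂ) + lam/2)^2
      = S2 + lam * S1 + ((n:ℂ)+1) * lam^2/4 := by
    have e2 : ∀ j ∈ Finset.range (n+1), ((j:ℂ) + lam/2)^2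
        = (j:ℂ)^2 + lam * (j:ℂ) + lam^2/4 := by intros; ring
    rw [Finset.sum_congr rfl e2, Finset.sum_add_distrib, Finset.sum_add_distrib,
      ← Finset.mul_sum]
    simp [Finset.card_range, hS1def, hS2def]
    ring
  -- value of S1
  have hS1v : S1 * 2 = ((n:ℂ) + 1) * n := by
    have h0 := congrArg (Nat.cast : ℕ → ℂ) (Finset.sum_range_id_mul_two (n+1))
    push_cast at h0
    rw [hS1def]
    linear_combination h0
  -- compare sums
  have hsum : (Lmul n k lam).sum = (Rmul n lam).sum := congrArg Multiset.sum h
  rw [Lmul, Rmul, Multiset.sum_cons] at hsum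
  simp only [Multiset.bind_singleton, Multiset.pure_def, Multiset.bind_def,
    Multiset.map_map] at hsum
  rw [← Finset.range_val, ← Finset.sum_eq_multiset_sum, ← Finset.sum_eq_multiset_sum] at hsum
  simp only [Function.comp_def] at hsum
  rw [hsplit1] at hsum
  -- compare sums of squares
  have hsq : ((Lmul n k lam).map (fun x : ℂ => x^2)).sum
      = ((Rmul n lam).map (fun x : ℂ => x^2)).sum := by rw [h]
  rw [Lmul, Rmul, Multiset.map_cons, Multiset.sum_cons] at hsq
  simp only [Multiset.bind_singleton, Multiset.pure_def, Multiset.bind_def,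
    Multiset.map_map] at hsq
  rw [← Finset.range_val, ← Finset.sum_eq_multiset_sum, ← Finset.sum_eq_multiset_sum] at hsq
  simp only [Function.comp_def] at hsq
  rw [hsplit2] at hsq
  -- algebra
  have e1 : ((n:ℂ) + 1) * lam = 2 * k - n := by linear_combination herase1 - hsum
  have key : ((n:ℂ) + 1) * ((n:ℂ) + 2) * lam^2 = 0 := by
    linear_combination (-4 : ℂ) * hsq + (4 : ℂ) * herase2 + (-2 * lam) * hS1v
      + (2 * lam * ((n:ℂ)+1) - 4 * (n:ℂ)) * e1
  have hn1 : ((n:ℂ) + 1) ≠ 0 := Nat.cast_add_one_ne_zero n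
  have hn2 : ((n:ℂ) + 2) ≠ 0 := by
    have e : ((n:ℂ) + 2) = ((n + 2 : ℕ) : ℂ) := by push_cast; ring
    rw [e]
    exact Nat.cast_ne_zero.mpr (by omega)
  have hl : lam = 0 := by
    rcases mul_eq_zero.mp key with h' | h'
    · exact ((mul_ne_zero hn1 hn2) h').elim
    · exact pow_eq_zero_iff (by norm_num) |>.mp h'
  exact Or.inl hl
end

section
/- Let n ≥ 1 and λ a complex number. If for every k ∈ {0,…,n} the multiset L_k = {k − λ(n+1)/2} ∪ ({0,…,n} \ {n−k}) contains a repeated element, then λ = 0. -/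
open Finset

theorem all_repeated_implies_lambda_zero (n : ℕ) (hn : 1 ≤ n) (lam : ℂ)
    (h : ∀ k ≤ n, ¬ (Lmul n k lam).Nodup) :
    lam = 0 := by
  have key : ∀ k ≤ n, ∃ j ∈ (Finset.range (n+1)).erase (n-k),
      (k : ℂ) - lam * ((n : ℂ) + 1) / 2 = (j : ℂ) := by
    intro k hk
    have hs : (((Finset.range (n + 1)).erase (n - k)).val.map
        (fun j : ℕ => (j : ℂ))).Nodup :=
      (Finset.nodup _).map Nat.cast_injective
    have hk' := h k hk
    rw [Lmul, Multiset.nodup_cons] at hk'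
    push_neg at hk'
    simp only [bind_pure_comp, Multiset.fmap_def, Multiset.mem_map, Multiset.map_id'] at hk'
    have hex := not_not.mp (fun hnot => hk' hnot hs)
    obtain ⟨j, hj, hje⟩ := hex
    exact ⟨j, hj, hje.symm⟩
  obtain ⟨j0, hj0, e0⟩ := key 0 (Nat.zero_le n)
  obtain ⟨jn, hjn, en⟩ := key n le_rfl
  rw [Finset.mem_erase, Finset.mem_range] at hj0 hjn
  rw [Nat.sub_zero] at hj0
  rw [Nat.sub_self] at hjn
  have hsum : ((n + j0 : ℕ) : ℂ) = (jn : ℂ) := by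
    push_cast
    push_cast at e0 en
    linear_combination en - e0
  have hsum' : n + j0 = jn := Nat.cast_injective hsum
  have hle : jn ≤ n := Nat.lt_succ_iff.mp hjn.2
  have hj00 : j0 = 0 := by omega
  rw [hj00] at e0
  push_cast at e0
  have hne : ((n : ℂ) + 1) ≠ 0 := Nat.cast_add_one_ne_zero n
  have hmul : lam * ((n : ℂ) + 1) = 0 := by linear_combination -2 * e0
  rcases mul_eq_zero.mp hmul with h1 | h1
  · exact h1
  · exact absurd h1 hne
end

section
/- Let f(t) = e^{λt}/(q + coth(t)) with q = −1 (so a = 1+q = 0, b = 1−q = 2): f(t) = e^{λt}/(coth(t) − 1), and suppose λ = 2(k−n)/(n+1) for some k ∈ {0,…,n−1}. Then f satisfies the Hirzebruch functional equation ∑_{k'=0}^n ∏_{i≠k'} 1/f(u_i − u_{k'}) = 0. -/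
open Complex Finset

open Polynomial in
lemma lagrange_coeff_zero {N k : ℕ} (hk : k < N) (x : Fin (N+1) → ℂ)
    (hx : Function.Injective x) :
    ∑ j : Fin (N+1), x j ^ k * ∏ i ∈ Finset.univ.erase j, (x j - x i)⁻¹ = 0 := by
  have hinj : Set.InjOn x (Finset.univ : Finset (Fin (N+1))) := hx.injOn
  have hcard : #(Finset.univ : Finset (Fin (N+1))) = N + 1 := by simp
  have hdeg : (X ^ k : ℂ[X]).degree < (#(Finset.univ : Finset (Fin (N+1))) : ℕ) := by
    rw [hcard, degree_X_pow]
    exact_mod_cast Nat.lt_succ_of_lt hk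
  have hP : (X ^ k : ℂ[X]) = Lagrange.interpolate Finset.univ x (fun i => x i ^ k) := by
    refine Lagrange.eq_interpolate_of_eval_eq _ hinj hdeg fun i _ => by simp
  have hco := congrArg (fun p : ℂ[X] => p.coeff N) hP
  simp only [coeff_X_pow, Lagrange.interpolate_apply, finset_sum_coeff] at hco
  rw [if_neg hk.ne'] at hco
  rw [hco]
  refine Finset.sum_congr rfl fun j _ => (Eq.symm ?_)
  have hb : (Lagrange.basis Finset.univ x j).natDegree = N := by
    rw [Lagrange.natDegree_basis hinj (mem_univ j), hcard]; omega
  rw [coeff_C_mul]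
  congr 1
  have : (Lagrange.basis Finset.univ x j).coeff N =
      (Lagrange.basis Finset.univ x j).leadingCoeff := by
    rw [Polynomial.leadingCoeff, hb]
  rw [this, Lagrange.basis, leadingCoeff_prod]
  refine Finset.prod_congr rfl fun i hi => ?_
  have hne : x j ≠ x i := fun h => (mem_erase.mp hi).1 (hx h).symm
  rw [Lagrange.basisDivisor, leadingCoeff_mul, leadingCoeff_C, leadingCoeff_X_sub_C, mul_one]

lemma lagrange_coeff_zero' {N k : ℕ} (hk : k < N) (x : Fin (N+1) → ℂ)
    (hx : Function.Injective x) :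
    ∑ j : Fin (N+1), x j ^ k * ∏ i ∈ Finset.univ.erase j, (x i - x j)⁻¹ = 0 := by
  have h := lagrange_coeff_zero hk (fun i => -x i)
    (fun a b hab => hx (neg_injective hab))
  have h2 : ∑ j : Fin (N+1), (-x j) ^ k * ∏ i ∈ Finset.univ.erase j, (-x j - -x i)⁻¹
      = (-1 : ℂ)^k * ∑ j : Fin (N+1), x j ^ k *
          ∏ i ∈ Finset.univ.erase j, (x i - x j)⁻¹ := by
    rw [Finset.mul_sum]
    refine Finset.sum_congr rfl fun j _ => ?_
    rw [neg_pow]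
    have : ∀ i, (-x j - -x i) = x i - x j := fun i => by ring
    simp_rw [this]
    ring
  rw [h2] at h
  exact (mul_eq_zero.mp h).resolve_left (pow_ne_zero _ (by norm_num))

lemma exp_two_sub_one_ne (t : ℂ) (h : Complex.sinh t ≠ 0) :
    Complex.exp (2*t) - 1 ≠ 0 := by
  have h1 : Complex.exp (2*t) - 1 = Complex.exp t * (2 * Complex.sinh t) := by
    rw [Complex.two_sinh, two_mul t, Complex.exp_add]
    have e1 : Complex.exp t * Complex.exp (-t) = 1 := by
      rw [← Complex.exp_add]; simp
    linear_combination e1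
  rw [h1]
  exact mul_ne_zero (Complex.exp_ne_zero t) (mul_ne_zero two_ne_zero h)

lemma factor_eq (lam t : ℂ) (h : Complex.sinh t ≠ 0) :
    (Complex.exp (lam*t) / (coth t - 1))⁻¹
      = Complex.exp (-(lam*t)) * 2 * (Complex.exp (2*t) - 1)⁻¹ := by
  have h2 : coth t - 1 = Complex.exp (-t) / Complex.sinh t := by
    rw [coth, div_sub_one h, Complex.cosh_sub_sinh]
  have h3 : Complex.exp (2*t) - 1 = Complex.exp t * (2 * Complex.sinh t) := by
    rw [Complex.two_sinh, two_mul t, Complex.exp_add]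
    have e1 : Complex.exp t * Complex.exp (-t) = 1 := by
      rw [← Complex.exp_add]; simp
    linear_combination e1
  rw [h2, h3, Complex.exp_neg (lam*t), Complex.exp_neg t]
  field_simp

theorem degenerate_level_hirzebruch_zero (n : ℕ) (hn : 1 ≤ n) (k : ℕ) (hk : k < n)
    (lam : ℂ) (hlam : lam = 2 * ((k : ℂ) - (n : ℂ)) / ((n : ℂ) + 1)) :
    ∀ u : Fin (n + 1) → ℂ,
      (∀ i k' : Fin (n + 1), i ≠ k' →
        Complex.sinh (u i - u k') ≠ 0 ∧ coth (u i - u k') - 1 ≠ 0) →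
      ∑ k' : Fin (n + 1), ∏ i ∈ Finset.univ.erase k',
        (Complex.exp (lam * (u i - u k')) / (coth (u i - u k') - 1))⁻¹ = 0 := by
  intro u hu
  set x : Fin (n+1) → ℂ := fun i => Complex.exp (2 * u i) with hxdef
  have hn1 : ((n : ℂ) + 1) ≠ 0 := Nat.cast_add_one_ne_zero n
  have hlam' : lam * ((n : ℂ) + 1) = 2 * ((k : ℂ) - (n : ℂ)) := by
    rw [hlam]; field_simp
  -- injectivity of x
  have hxinj : Function.Injective x := by
    intro i j hij
    by_contra hne
    have hs := (hu i j hne).1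
    have : Complex.exp (2 * (u i - u j)) - 1 ≠ 0 := exp_two_sub_one_ne _ hs
    apply this
    have : Complex.exp (2 * (u i - u j)) = x i * (x j)⁻¹ := by
      rw [hxdef]
      rw [← Complex.exp_neg, ← Complex.exp_add]
      ring_nf
    rw [this, hij, mul_inv_cancel₀ (Complex.exp_ne_zero _), sub_self]
  set S : ℂ := ∑ i : Fin (n+1), u i with hS
  have key : ∀ k' : Fin (n+1),
      ∏ i ∈ Finset.univ.erase k',
        (Complex.exp (lam * (u i - u k')) / (coth (u i - u k') - 1))⁻¹
      = (Complex.exp (-(lam * S)) * 2^n) *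
        (x k' ^ k * ∏ i ∈ Finset.univ.erase k', (x i - x k')⁻¹) := by
    intro k'
    have hcardE : #(Finset.univ.erase k') = n := by
      rw [Finset.card_erase_of_mem (mem_univ k')]; simp
    have step1 : ∏ i ∈ Finset.univ.erase k',
        (Complex.exp (lam * (u i - u k')) / (coth (u i - u k') - 1))⁻¹
        = ∏ i ∈ Finset.univ.erase k',
          (Complex.exp (-(lam * (u i - u k'))) * 2 * (Complex.exp (2*(u i - u k')) - 1)⁻¹) := by
      refine Finset.prod_congr rfl fun i hi => ?_
      exact factor_eq lam _ (hu i k' (Finset.mem_erase.mp hi).1).1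
    rw [step1]
    simp_rw [Finset.prod_mul_distrib]
    have pA : ∏ i ∈ Finset.univ.erase k', Complex.exp (-(lam * (u i - u k')))
        = Complex.exp (-(lam * S)) * Complex.exp (lam * ((n:ℂ)+1) * u k') := by
      rw [← Complex.exp_sum, ← Complex.exp_add]
      congr 1
      have hsum : ∑ i ∈ Finset.univ.erase k', (u i - u k') = S - ((n:ℂ)+1) * u k' := by
        rw [Finset.sum_sub_distrib, Finset.sum_const, hcardE,
          Finset.sum_erase_eq_sub (mem_univ k'), ← hS]
        push_cast
        ring
      calc ∑ i ∈ Finset.univ.erase k', -(lam * (u i - u k'))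
          = -(lam * ∑ i ∈ Finset.univ.erase k', (u i - u k')) := by
            rw [Finset.mul_sum, ← Finset.sum_neg_distrib]
        _ = _ := by rw [hsum]; ring
    have pB : ∏ i ∈ Finset.univ.erase k', (2:ℂ) = 2^n := by
      rw [Finset.prod_const, hcardE]
    have pC : ∏ i ∈ Finset.univ.erase k', (Complex.exp (2*(u i - u k')) - 1)⁻¹
        = x k' ^ n * ∏ i ∈ Finset.univ.erase k', (x i - x k')⁻¹ := by
      have hfac : ∀ i, Complex.exp (2*(u i - u k')) - 1 = (x i - x k') * (x k')⁻¹ := by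
        intro i
        have : Complex.exp (2*(u i - u k')) = x i * (x k')⁻¹ := by
          rw [hxdef, ← Complex.exp_neg, ← Complex.exp_add]; ring_nf
        have hx0 : x k' ≠ 0 := Complex.exp_ne_zero _
        rw [this]
        field_simp
      simp_rw [hfac, mul_inv, inv_inv]
      rw [Finset.prod_mul_distrib, Finset.prod_const, hcardE, mul_comm]
    rw [pA, pB, pC]
    have epow : Complex.exp (lam * ((n:ℂ)+1) * u k') * x k' ^ n = x k' ^ k := by
      have harg : lam * ((n:ℂ)+1) * u k' = (k:ℂ)*(2*u k') - (n:ℂ)*(2*u k') := by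
        linear_combination u k' * hlam'
      rw [harg, Complex.exp_sub, Complex.exp_nat_mul, Complex.exp_nat_mul]
      have hxe : x k' = Complex.exp (2 * u k') := rfl
      rw [hxe]
      field_simp
    calc Complex.exp (-(lam*S)) * Complex.exp (lam * ((n:ℂ)+1) * u k') * 2^n *
          (x k' ^ n * ∏ i ∈ Finset.univ.erase k', (x i - x k')⁻¹)
        = (Complex.exp (-(lam*S)) * 2^n) *
          ((Complex.exp (lam * ((n:ℂ)+1) * u k') * x k' ^ n) *
            ∏ i ∈ Finset.univ.erase k', (x i - x k')⁻¹) := by ring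
      _ = _ := by rw [epow]
  calc ∑ k' : Fin (n + 1), ∏ i ∈ Finset.univ.erase k',
        (Complex.exp (lam * (u i - u k')) / (coth (u i - u k') - 1))⁻¹
      = ∑ k' : Fin (n+1), (Complex.exp (-(lam * S)) * 2^n) *
          (x k' ^ k * ∏ i ∈ Finset.univ.erase k', (x i - x k')⁻¹) :=
        Finset.sum_congr rfl fun k' _ => key k'
    _ = (Complex.exp (-(lam * S)) * 2^n) *
        ∑ k' : Fin (n+1), x k' ^ k * ∏ i ∈ Finset.univ.erase k', (x i - x k')⁻¹ :=
        (Finset.mul_sum _ _ _).symm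
    _ = 0 := by rw [lagrange_coeff_zero' hk x hxinj, mul_zero]
end
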